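/- For every real s > 0 and natural number n ≥ 0, ∑_{k=0}^{n} (-1)^k C(n,k) · (∏_{j=1}^{k} j/(s+j)) · (∑_{i=0}^{k} s/(s+i)) = (s/(s+n))^2, where the empty product is 1 and the i=0 term of the inner sum is 1. -/

import Mathlib

open Finset

-- alternating sum of C(n,k)C(k,j)
lemma aux1 (n j : ℕ) (hj : j ≤ n) :
    ∑ k ∈ range (n + 1), (-1 : ℝ) ^ k * (n.choose k : ℝ) * (k.choose j : ℝ) =
      if j = n then (-1 : ℝ) ^ n else 0 := by
  have h1 : ∑ k ∈ range (n + 1), (-1 : ℝ) ^ k * (n.choose k : ℝ) * (k.choose j : ℝ) =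
      ∑ k ∈ Ico j (n + 1), (-1 : ℝ) ^ k * (n.choose k : ℝ) * (k.choose j : ℝ) := by
    symm
    apply Finset.sum_subset
    · intro x hx
      simp only [mem_Ico] at hx
      simp [mem_range, hx.2]
    · intro x hx hx'
      simp only [mem_range] at hx
      simp only [mem_Ico, hx, and_true, not_le] at hx'
      rw [Nat.choose_eq_zero_of_lt hx']
      simp
  rw [h1, Finset.sum_Ico_eq_sum_range]
  have h2 : ∀ m ∈ range (n + 1 - j), (-1 : ℝ) ^ (j + m) * ((n.choose (j + m)) : ℝ) *
      (((j + m).choose j) : ℝ) =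
      ((-1 : ℝ) ^ j * (n.choose j : ℝ)) * ((-1 : ℝ) ^ m * ((n - j).choose m : ℝ)) := by
    intro m hm
    simp only [mem_range] at hm
    have hkn : j + m ≤ n := by omega
    have := Nat.choose_mul (n := n) (Nat.le_add_right j m)
    have h3 : (j + m) - j = m := by omega
    rw [h3] at this
    have hc : ((n.choose (j + m)) : ℝ) * (((j + m).choose j) : ℝ) =
        ((n.choose j) : ℝ) * (((n - j).choose m) : ℝ) := by exact_mod_cast congrArg Nat.cast this
    rw [pow_add]
    calc (-1 : ℝ) ^ j * (-1 : ℝ) ^ m * (n.choose (j + m) : ℝ) * ((j + m).choose j : ℝ)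
        = ((n.choose (j + m)) : ℝ) * (((j + m).choose j) : ℝ) * ((-1:ℝ)^j * (-1:ℝ)^m) := by ring
      _ = ((n.choose j) : ℝ) * (((n - j).choose m) : ℝ) * ((-1:ℝ)^j * (-1:ℝ)^m) := by rw [hc]
      _ = (-1 : ℝ) ^ j * (n.choose j : ℝ) * ((-1 : ℝ) ^ m * ((n - j).choose m : ℝ)) := by ring
  rw [Finset.sum_congr rfl h2, ← Finset.mul_sum]
  have h4 : n + 1 - j = (n - j) + 1 := by omega
  have h5 : ∑ m ∈ range ((n - j) + 1), (-1 : ℝ) ^ m * ((n - j).choose m : ℝ) =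
      if n - j = 0 then 1 else 0 := by
    have := Int.alternating_sum_range_choose (n := n - j)
    have := congrArg (Int.cast : ℤ → ℝ) this
    push_cast at this
    convert this using 2
  rw [h4, h5]
  by_cases h : j = n
  · subst h; simp
  · have : n - j ≠ 0 := by omega
    simp [h, this]

-- binomial inversion
lemma binom_inv (f : ℕ → ℝ) (n : ℕ) :
    ∑ k ∈ range (n + 1), (-1 : ℝ) ^ k * (n.choose k : ℝ) *
      (∑ j ∈ range (k + 1), (-1 : ℝ) ^ j * (k.choose j : ℝ) * f j) = f n := by
  have hext : ∀ k ∈ range (n + 1),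
      (-1 : ℝ) ^ k * (n.choose k : ℝ) *
        (∑ j ∈ range (k + 1), (-1 : ℝ) ^ j * (k.choose j : ℝ) * f j) =
      ∑ j ∈ range (n + 1), (-1 : ℝ) ^ k * (n.choose k : ℝ) *
        ((-1 : ℝ) ^ j * (k.choose j : ℝ) * f j) := by
    intro k hk
    simp only [mem_range] at hk
    rw [Finset.mul_sum]
    apply Finset.sum_subset
    · intro x hx; simp only [mem_range] at hx ⊢; omega
    · intro x hx hx'
      simp only [mem_range, not_lt] at hx hx'
      rw [Nat.choose_eq_zero_of_lt hx']
      simp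
  rw [Finset.sum_congr rfl hext, Finset.sum_comm]
  have h2 : ∀ j ∈ range (n + 1),
      ∑ k ∈ range (n + 1), (-1 : ℝ) ^ k * (n.choose k : ℝ) *
        ((-1 : ℝ) ^ j * (k.choose j : ℝ) * f j) =
      ((-1 : ℝ) ^ j * f j) * (if j = n then (-1 : ℝ) ^ n else 0) := by
    intro j hj
    simp only [mem_range] at hj
    rw [← aux1 n j (by omega), Finset.mul_sum]
    apply Finset.sum_congr rfl
    intro k hk; ring
  rw [Finset.sum_congr rfl h2]
  simp only [mul_ite, mul_zero]
  rw [Finset.sum_ite_eq' (range (n + 1)) n]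
  simp only [mem_range, Nat.lt_succ_self, if_true]
  rw [mul_right_comm, ← pow_add, ← two_mul, pow_mul]
  norm_num

lemma pascal_sum (h : ℕ → ℝ) (n : ℕ) :
    ∑ k ∈ range (n + 2), (-1 : ℝ) ^ k * ((n + 1).choose k : ℝ) * h k =
      ∑ k ∈ range (n + 1), (-1 : ℝ) ^ k * (n.choose k : ℝ) * h k -
      ∑ k ∈ range (n + 1), (-1 : ℝ) ^ k * (n.choose k : ℝ) * h (k + 1) := by
  rw [Finset.sum_range_succ' (fun k => (-1 : ℝ) ^ k * ((n + 1).choose k : ℝ) * h k) (n + 1)]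
  have e1 : ∀ i ∈ range (n + 1),
      (-1 : ℝ) ^ (i + 1) * ((n + 1).choose (i + 1) : ℝ) * h (i + 1) =
      (-1 : ℝ) ^ (i + 1) * (n.choose i : ℝ) * h (i + 1)
        + (-1 : ℝ) ^ (i + 1) * (n.choose (i + 1) : ℝ) * h (i + 1) := by
    intro i hi
    rw [Nat.choose_succ_succ]
    push_cast
    ring
  rw [Finset.sum_congr rfl e1, Finset.sum_add_distrib]
  have e2 : ∑ i ∈ range (n + 1), (-1 : ℝ) ^ (i + 1) * (n.choose i : ℝ) * h (i + 1) =
      - ∑ i ∈ range (n + 1), (-1 : ℝ) ^ i * (n.choose i : ℝ) * h (i + 1) := by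
    rw [← Finset.sum_neg_distrib]
    apply Finset.sum_congr rfl
    intro i hi
    rw [pow_succ]
    ring
  have e3 : ∑ i ∈ range (n + 1), (-1 : ℝ) ^ (i + 1) * (n.choose (i + 1) : ℝ) * h (i + 1)
      + (-1 : ℝ) ^ 0 * ((n + 1).choose 0 : ℝ) * h 0
      = ∑ k ∈ range (n + 1), (-1 : ℝ) ^ k * (n.choose k : ℝ) * h k := by
    rw [Finset.sum_range_succ' (fun k => (-1 : ℝ) ^ k * (n.choose k : ℝ) * h k) n]
    rw [Finset.sum_range_succ]
    simp [Nat.choose_succ_self]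
  rw [e2]
  linarith [e3]

lemma prod_shift (s : ℝ) (hs : 0 < s) (k : ℕ) :
    ∏ j ∈ Icc 1 k, ((j : ℝ) / (s + 1 + j)) =
      (∏ j ∈ Icc 1 k, ((j : ℝ) / (s + j))) * (s + 1) / (s + k + 1) := by
  induction k with
  | zero =>
    simp only [Nat.cast_zero, add_zero, Icc_self, Icc_eq_empty_of_lt (by norm_num : (1:ℕ) > 0)]
    simp
    rw [eq_comm, div_eq_one_iff_eq (by positivity)]
  | succ k ih =>
    rw [Finset.prod_Icc_succ_top (Nat.le_add_left 1 k),
        Finset.prod_Icc_succ_top (Nat.le_add_left 1 k), ih]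
    have h1 : s + 1 + ((k : ℝ) + 1) ≠ 0 := by positivity
    have h2 : s + (k : ℝ) + 1 ≠ 0 := by positivity
    have h3 : s + ((k : ℝ) + 1) ≠ 0 := by positivity
    have h4 : s + ((k : ℝ) + 1) + 1 ≠ 0 := by positivity
    push_cast
    field_simp
    ring

lemma shift_sum (s : ℝ) (k : ℕ) :
    ∑ i ∈ range (k + 1), 1 / (s + 1 + (i : ℝ)) =
      ∑ i ∈ range (k + 1), 1 / (s + (i : ℝ)) - 1 / s + 1 / (s + (k : ℝ) + 1) := by
  induction k with
  | zero => simp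
  | succ k ih =>
    rw [Finset.sum_range_succ, ih, Finset.sum_range_succ (fun i => 1 / (s + (i : ℝ))) (k + 1)]
    push_cast
    ring

lemma forward (k : ℕ) : ∀ (s : ℝ), 0 < s →
    ∑ j ∈ range (k + 1), (-1 : ℝ) ^ j * (k.choose j : ℝ) * (s / (s + j)) ^ 2 =
      (∏ j ∈ Icc 1 k, ((j : ℝ) / (s + j))) * (∑ i ∈ range (k + 1), s / (s + i)) := by
  induction k with
  | zero => intro s hs; simp [div_self (ne_of_gt hs)]
  | succ k ih =>
    intro s hs
    have hs1 : (0 : ℝ) < s + 1 := by linarith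
    rw [pascal_sum (fun j => (s / (s + j)) ^ 2) k]
    have hterm : ∀ j ∈ range (k + 1),
        (-1 : ℝ) ^ j * (k.choose j : ℝ) * (s / (s + ↑(j + 1))) ^ 2 =
        (s / (s + 1)) ^ 2 * ((-1 : ℝ) ^ j * (k.choose j : ℝ) * ((s + 1) / (s + 1 + ↑j)) ^ 2) := by
      intro j hj
      have hd : s + (↑j + 1) ≠ 0 := by positivity
      have hd2 : s + 1 + (j : ℝ) ≠ 0 := by positivity
      have key : s / (s + ↑(j + 1)) = (s / (s + 1)) * ((s + 1) / (s + 1 + ↑j)) := by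
        push_cast
        rw [div_mul_div_comm, mul_comm (s + 1) (s + 1 + (j : ℝ)),
          mul_div_mul_right _ _ (ne_of_gt hs1)]
        have : s + ((j : ℝ) + 1) = s + 1 + (j : ℝ) := by ring
        rw [this]
      rw [key, mul_pow]
      ring
    rw [Finset.sum_congr rfl hterm, ← Finset.mul_sum, ih s hs]
    have ih1 := ih (s + 1) hs1
    rw [ih1, prod_shift s hs k]
    rw [Finset.prod_Icc_succ_top (Nat.le_add_left 1 k),
        Finset.sum_range_succ (fun i => s / (s + (i : ℝ))) (k + 1)]
    -- rewrite the sums in terms of U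
    set U := ∑ i ∈ range (k + 1), 1 / (s + (i : ℝ)) with hU
    have hT : ∑ i ∈ range (k + 1), s / (s + (i : ℝ)) = s * U := by
      rw [hU, Finset.mul_sum]
      exact Finset.sum_congr rfl fun i _ => by rw [mul_one_div]
    have hshift : ∑ i ∈ range (k + 1), 1 / (s + 1 + (i : ℝ)) = U - 1 / s + 1 / (s + ↑k + 1) := by
      rw [hU]; exact shift_sum s k
    have hT1 : ∑ i ∈ range (k + 1), (s + 1) / (s + 1 + (i : ℝ)) =
        (s + 1) * (U - 1 / s + 1 / (s + ↑k + 1)) := by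
      rw [← hshift, Finset.mul_sum]
      exact Finset.sum_congr rfl fun i _ => by rw [mul_one_div]
    rw [hT, hT1]
    have h1 : s + (k : ℝ) + 1 ≠ 0 := by positivity
    have h2 : s + 1 ≠ 0 := by positivity
    have h3 : (s : ℝ) ≠ 0 := ne_of_gt hs
    have h4 : s + ((k : ℝ) + 1) ≠ 0 := by positivity
    push_cast
    field_simp
    ring

theorem stmt_14 (s : ℝ) (hs : 0 < s) (n : ℕ) :
    ∑ k ∈ Finset.range (n + 1), (-1 : ℝ) ^ k * (n.choose k : ℝ) *
        (∏ j ∈ Finset.Icc 1 k, ((j : ℝ) / (s + j))) *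
        (∑ i ∈ Finset.range (k + 1), s / (s + i)) =
      (s / (s + n)) ^ 2 := by
  have h1 : ∀ k ∈ Finset.range (n + 1),
      (-1 : ℝ) ^ k * (n.choose k : ℝ) * (∏ j ∈ Finset.Icc 1 k, ((j : ℝ) / (s + j))) *
        (∑ i ∈ Finset.range (k + 1), s / (s + i)) =
      (-1 : ℝ) ^ k * (n.choose k : ℝ) *
        (∑ j ∈ Finset.range (k + 1), (-1 : ℝ) ^ j * (k.choose j : ℝ) * (s / (s + j)) ^ 2) := by
    intro k _
    rw [forward k s hs]
    ring
  rw [Finset.sum_congr rfl h1, binom_inv (fun j => (s / (s + (j : ℝ))) ^ 2) n]
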